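/- Let T be a finite set with |T| = n ≥ 1, let w ≥ 1 be a natural number, and let P_1, …, P_w be independent, identically distributed random subsets of T on a probability space (Ω, 𝓕, Pr) with 𝔼[|P_1|] = m, where 0 ≤ m ≤ n. Then the expected number of elements of T left uncovered satisfies 𝔼[|T \ (P_1 ∪ ⋯ ∪ P_w)|] ≥ n · (1 − m/n)^w. -/

import Mathlib

open MeasureTheory ProbabilityTheory

section Aux
variable {Ω : Type*} [MeasurableSpace Ω] {μ : Measure Ω} [IsProbabilityMeasure μ]

lemma integral_ite_mem' (p : Ω → Prop) [DecidablePred p] (hp : MeasurableSet {ω | p ω}) :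
    ∫ ω, (if p ω then (1:ℝ) else 0) ∂μ = (μ {ω | p ω}).toReal := by
  have h : (fun ω => if p ω then (1:ℝ) else 0) = Set.indicator {ω | p ω} (fun _ => 1) := by
    ext ω; by_cases hω : p ω <;> simp [Set.indicator, hω]
  rw [h, integral_indicator_const _ hp]; simp; rfl

lemma integrable_ite_mem' (p : Ω → Prop) [DecidablePred p] (hp : MeasurableSet {ω | p ω}) :
    Integrable (fun ω => if p ω then (1:ℝ) else 0) μ := by
  have h : (fun ω => if p ω then (1:ℝ) else 0) = Set.indicator {ω | p ω} (fun _ => 1) := by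
    ext ω; by_cases hω : p ω <;> simp [Set.indicator, hω]
  rw [h]; exact (integrable_const 1).indicator hp

lemma integral_card_filter' {T : Type*} [Fintype T] (p : T → Ω → Prop)
    [∀ τ ω, Decidable (p τ ω)] (hp : ∀ τ, MeasurableSet {ω | p τ ω}) :
    ∫ ω, ((Finset.univ.filter (fun τ => p τ ω)).card : ℝ) ∂μ
      = ∑ τ, (μ {ω | p τ ω}).toReal := by
  have h1 : ∀ ω, ((Finset.univ.filter (fun τ => p τ ω)).card : ℝ)
      = ∑ τ, (if p τ ω then (1:ℝ) else 0) := by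
    intro ω
    rw [Finset.card_filter]
    push_cast
    exact Finset.sum_congr rfl (fun τ _ => by split <;> simp)
  simp_rw [h1]
  rw [integral_finset_sum _ (fun τ _ => integrable_ite_mem' (p τ) (hp τ))]
  exact Finset.sum_congr rfl (fun τ _ => integral_ite_mem' (p τ) (hp τ))

end Aux

/-- Key probabilistic lower bound: if `P 1, …, P w` are i.i.d. random subsets of a
finite set `T` with `|T| = n ≥ 1` and `𝔼[|P 1|] = m` (`0 ≤ m ≤ n`), then the expected
number of uncovered elements satisfies `𝔼[|T \ (P 1 ∪ ⋯ ∪ P w)|] ≥ n ⬝ (1 − m/n)^w`. -/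
theorem expected_uncovered_ge
    (Ω : Type*) [MeasurableSpace Ω] (μ : Measure Ω) [IsProbabilityMeasure μ]
    (T : Type*) [Fintype T] [DecidableEq T]
    [MeasurableSpace (Finset T)] [MeasurableSingletonClass (Finset T)]
    (n : ℕ) (hn : Fintype.card T = n) (hn1 : 1 ≤ n)
    (w : ℕ) (hw : 1 ≤ w)
    (P : Fin w → Ω → Finset T)
    (hmeas : ∀ i, Measurable (P i))
    (hindep : iIndepFun P μ)
    (hident : ∀ i, IdentDistrib (P i) (P ⟨0, hw⟩) μ μ)
    (m : ℝ) (hm0 : 0 ≤ m) (hmn : m ≤ n)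
    (hmean : ∫ ω, ((P ⟨0, hw⟩ ω).card : ℝ) ∂μ = m) :
    (n : ℝ) * (1 - m / n) ^ w
      ≤ ∫ ω, ((Finset.univ.filter (fun τ : T => ∀ i, τ ∉ P i ω)).card : ℝ) ∂μ := by
  classical
  set p0 := P ⟨0, hw⟩ with hp0
  have hAmeas' : ∀ (i : Fin w) (τ : T), MeasurableSet {ω | τ ∈ P i ω} := fun i τ =>
    hmeas i ((Set.toFinite {s : Finset T | τ ∈ s}).measurableSet)
  have hAmeas : ∀ (i : Fin w) (τ : T), MeasurableSet {ω | τ ∉ P i ω} := fun i τ =>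
    hmeas i ((Set.toFinite {s : Finset T | τ ∉ s}).measurableSet)
  set q : T → ℝ := fun τ => (μ {ω | τ ∈ p0 ω}).toReal with hqdef
  have hq0 : ∀ τ, 0 ≤ q τ := fun τ => ENNReal.toReal_nonneg
  have hq1 : ∀ τ, q τ ≤ 1 := fun τ => by
    simpa [hqdef] using ENNReal.toReal_mono ENNReal.one_ne_top (prob_le_one (μ := μ))
  -- sum of q equals m
  have hsum : ∑ τ, q τ = m := by
    rw [← hmean]
    have h2 : ∀ ω, ((p0 ω).card : ℝ)
        = ((Finset.univ.filter (fun τ => τ ∈ p0 ω)).card : ℝ) := by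
      intro ω; rw [Finset.filter_univ_mem]
    simp only [hp0] at h2 ⊢
    simp_rw [h2]
    rw [integral_card_filter' (μ := μ) (fun τ ω => τ ∈ P ⟨0, hw⟩ ω) (fun τ => hAmeas' _ τ)]
  -- probability of a point being uncovered
  have hkey : ∀ τ : T, (μ {ω | ∀ i, τ ∉ P i ω}).toReal = (1 - q τ) ^ w := by
    intro τ
    have hinter : {ω | ∀ i, τ ∉ P i ω} = ⋂ i, {ω | τ ∉ P i ω} := by ext ω; simp
    have hprod : μ (⋂ i, {ω | τ ∉ P i ω}) = ∏ i : Fin w, μ {ω | τ ∉ P i ω} :=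
      hindep.meas_iInter (fun i =>
        ⟨{s : Finset T | τ ∉ s}, (Set.toFinite _).measurableSet, rfl⟩)
    have hid : ∀ i, μ {ω | τ ∉ P i ω} = μ {ω | τ ∉ p0 ω} := fun i =>
      (hident i).measure_mem_eq ((Set.toFinite {s : Finset T | τ ∉ s}).measurableSet)
    have hcompl : μ {ω | τ ∉ p0 ω} = 1 - μ {ω | τ ∈ p0 ω} := by
      have h3 : {ω | τ ∉ p0 ω} = {ω | τ ∈ p0 ω}ᶜ := rfl
      rw [h3, prob_compl_eq_one_sub (hAmeas' _ τ)]
    rw [hinter, hprod]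
    simp_rw [hid, hcompl]
    rw [Finset.prod_const, Finset.card_univ, Fintype.card_fin, ENNReal.toReal_pow,
      ENNReal.toReal_sub_of_le prob_le_one ENNReal.one_ne_top, ENNReal.toReal_one]
  -- rewrite the RHS integral
  rw [integral_card_filter' (μ := μ) (fun τ ω => ∀ i, τ ∉ P i ω)
    (fun τ => by
      have hinter : {ω | ∀ i, τ ∉ P i ω} = ⋂ i, {ω | τ ∉ P i ω} := by ext ω; simp
      rw [hinter]; exact MeasurableSet.iInter (fun i => hAmeas i τ))]
  simp_rw [hkey]
  -- now a purely real inequality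
  have hn0 : (0:ℝ) < n := by exact_mod_cast hn1
  have hchev := pow_sum_div_card_le_sum_pow (s := Finset.univ)
    (f := fun τ : T => 1 - q τ) (fun τ _ => by simpa using sub_nonneg.2 (hq1 τ)) (w - 1)
  rw [Nat.sub_add_cancel hw] at hchev
  have hsum1 : ∑ τ, (1 - q τ) = (n : ℝ) - m := by
    rw [Finset.sum_sub_distrib, hsum, Finset.sum_const, Finset.card_univ, hn]; simp
  rw [hsum1, Finset.card_univ, hn] at hchev
  refine le_trans (le_of_eq ?_) hchev
  have hw' : w - 1 + 1 = w := Nat.sub_add_cancel hw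
  rw [one_sub_div hn0.ne', div_pow,
    show ((n:ℝ)) ^ w = (n:ℝ) ^ (w - 1) * n from by rw [← pow_succ, hw']]
  field_simp
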